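/- If a graph G admits a vertex partition V = A ∪ B such that G[B] is a tree, A is an independent set, and every vertex of B has at most one neighbor in A, then μ_s(G) ≤ (s²+s)(s²+s+1); in particular μ(G) ≤ 6. -/

import Mathlib

/-- The `s`-guess hat guessing number `μ_s(G)`. -/
noncomputable def sHatGuessingNumber {V : Type*} [Fintype V] (G : SimpleGraph V)
    (s : ℕ) : ℕ :=
  sSup {k : ℕ | ∃ F : V → (V → Fin k) → Finset (Fin k),
    (∀ v : V, ∀ x : V → Fin k, (F v x).card ≤ s) ∧
    (∀ v : V, ∀ x y : V → Fin k, (∀ u : V, G.Adj v u → x u = y u) → F v x = F v y) ∧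
    (∀ x : V → Fin k, ∃ v : V, x v ∈ F v x)}


set_option linter.unusedSectionVars false
set_option maxHeartbeats 1000000

set_option linter.unusedSectionVars false

open Relation

section Core

variable {W : Type*} [Fintype W] [DecidableEq W]

/-- relation: `a` is a child-step of `b`. -/
def prRel (pr : W → Option W) (a b : W) : Prop := pr a = some b

open Classical in
/-- descendants of `v` (including `v`). -/
noncomputable def desc (pr : W → Option W) (v : W) : Finset W :=
  Finset.univ.filter (fun u => ReflTransGen (prRel pr) u v)

lemma mem_desc {pr : W → Option W} {u v : W} :
    u ∈ desc pr v ↔ ReflTransGen (prRel pr) u v := by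
  classical
  simp [desc]

lemma self_mem_desc (pr : W → Option W) (v : W) : v ∈ desc pr v :=
  mem_desc.mpr ReflTransGen.refl

variable {pr : W → Option W} {h : W → ℕ}

lemma desc_height (hpr : ∀ a b, pr a = some b → h b < h a)
    {u v : W} (hu : u ∈ desc pr v) : h v ≤ h u := by
  rw [mem_desc] at hu
  induction hu with
  | refl => exact le_refl _
  | tail hab hbc ih => exact le_trans (le_of_lt (hpr _ _ hbc)) ih

lemma desc_subset_of_child {c v : W} (hc : pr c = some v) :
    desc pr c ⊆ desc pr v := by
  intro u hu
  exact mem_desc.mpr ((mem_desc.mp hu).tail hc)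

lemma not_mem_desc_of_child (hpr : ∀ a b, pr a = some b → h b < h a)
    {c v : W} (hc : pr c = some v) : v ∉ desc pr c := by
  intro hv
  have h1 : h c ≤ h v := desc_height hpr hv
  exact absurd (hpr _ _ hc) (not_lt.mpr h1)

lemma desc_ssubset_of_child (hpr : ∀ a b, pr a = some b → h b < h a)
    {c v : W} (hc : pr c = some v) : desc pr c ⊂ desc pr v :=
  Finset.ssubset_iff_of_subset (desc_subset_of_child hc) |>.mpr
    ⟨v, self_mem_desc pr v, not_mem_desc_of_child hpr hc⟩

/-- chains of a deterministic relation are comparable -/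
lemma chain_comparable {u a b : W} (ha : ReflTransGen (prRel pr) u a)
    (hb : ReflTransGen (prRel pr) u b) :
    ReflTransGen (prRel pr) a b ∨ ReflTransGen (prRel pr) b a := by
  induction ha using ReflTransGen.head_induction_on with
  | refl => exact Or.inl hb
  | head hstep _ ih =>
    rename_i x y _
    rcases hb.cases_head with rfl | ⟨z, hz, hzb⟩
    · exact Or.inr (ReflTransGen.head hstep (by assumption))
    · have : y = z := by
        have := hstep; unfold prRel at this hz; rw [this] at hz; exact Option.some.inj hz
      subst this
      exact ih hzb

/-- uniqueness of the child of `v` through which a descendant passes -/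
lemma child_unique (hpr : ∀ a b, pr a = some b → h b < h a)
    {u c c' v : W} (hc : pr c = some v) (hc' : pr c' = some v)
    (hu : u ∈ desc pr c) (hu' : u ∈ desc pr c') : c = c' := by
  rw [mem_desc] at hu hu'
  have key : ∀ {x y : W}, pr x = some v → pr y = some v →
      ReflTransGen (prRel pr) x y → x = y := by
    intro x y hx hy hxy
    rcases hxy.cases_head with rfl | ⟨z, hz, hzy⟩
    · rfl
    · have : z = v := by unfold prRel at hz; rw [hx] at hz; exact (Option.some.inj hz).symm
      rw [this] at hzy
      have h1 : h y ≤ h v := desc_height hpr (mem_desc.mpr hzy)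
      exact absurd (hpr _ _ hy) (not_lt.mpr h1)
  rcases chain_comparable hu hu' with hcc | hcc
  · exact key hc hc' hcc
  · exact (key hc' hc hcc).symm



lemma adv_core {k t : ℕ}
    (hk : t * (t + 1) + 1 ≤ k) (pr : W → Option W) (h : W → ℕ)
    (hpr : ∀ a b, pr a = some b → h b < h a) (r : W)
    (hroot : ∀ v, pr v = none → v = r)
    (F : W → (W → Fin k) → Finset (Fin k))
    (hcard : ∀ w y, (F w y).card ≤ t)
    (hloc : ∀ w (y y' : W → Fin k),
      (∀ u, pr w = some u ∨ pr u = some w → y u = y' u) → F w y = F w y') :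
    ∃ y : W → Fin k, ∀ w, y w ∉ F w y := by
  classical
  have hk0 : 0 < k := by omega
  set Φ : W → (W → Fin k) → Fin k → Prop := fun v x0 q =>
    ∃ x : W → Fin k, x v = q ∧ (∀ u, u ∉ desc pr v → x u = x0 u) ∧
      (∀ u ∈ desc pr v, x u ∉ F u x) with hΦ
  set Bd : W → (W → Fin k) → Finset (Fin k) := fun v x0 =>
    Finset.univ.filter (fun q => ¬ Φ v x0 q) with hBd
  have hBdmem : ∀ v x0 q, q ∉ Bd v x0 → Φ v x0 q := by
    intro v x0 q hq
    by_contra hn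
    exact hq (by simp [hBd, hn])
  have CL : ∀ n (v : W) (x0 : W → Fin k), (desc pr v).card ≤ n → (Bd v x0).card ≤ t := by
    intro n
    induction n with
    | zero =>
      intro v x0 h0
      have := Finset.card_pos.mpr ⟨v, self_mem_desc pr v⟩
      omega
    | succ n ih =>
      intro v x0 hn
      by_contra hbad
      push_neg at hbad
      obtain ⟨B₀, hB₀sub, hB₀card⟩ := Finset.exists_subset_card_eq (s := Bd v x0) (n := t+1) (by omega)
      have hB₀ne : B₀.Nonempty := Finset.card_pos.mp (by omega)
      obtain ⟨q₀, hq₀⟩ := hB₀ne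
      have hchild : ∀ c : W, ∃ (b : Fin k) (xc : Fin k → W → Fin k),
          pr c = some v → ∀ q ∈ B₀,
            (xc q) c = b ∧ (∀ u, u ∉ desc pr c → (xc q) u = Function.update x0 v q u) ∧
            (∀ u ∈ desc pr c, (xc q) u ∉ F u (xc q)) := by
        intro c
        by_cases hc : pr c = some v
        · have hcardD : (desc pr c).card ≤ n := by
            have := Finset.card_lt_card (desc_ssubset_of_child hpr hc)
            omega
          have hU : (B₀.biUnion (fun q => Bd c (Function.update x0 v q))).card ≤ t*(t+1) := by
            calc (B₀.biUnion (fun q => Bd c (Function.update x0 v q))).card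
                ≤ ∑ q ∈ B₀, (Bd c (Function.update x0 v q)).card := Finset.card_biUnion_le
              _ ≤ ∑ _q ∈ B₀, t := Finset.sum_le_sum (fun q _ => ih c _ hcardD)
              _ = t*(t+1) := by rw [Finset.sum_const, hB₀card, smul_eq_mul]; ring
          have hex : ∃ b : Fin k, b ∉ B₀.biUnion (fun q => Bd c (Function.update x0 v q)) := by
            by_contra hall
            push_neg at hall
            have hsub : (Finset.univ : Finset (Fin k)) ⊆
                B₀.biUnion (fun q => Bd c (Function.update x0 v q)) := fun b _ => hall b
            have := Finset.card_le_card hsub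
            simp only [Finset.card_univ, Fintype.card_fin] at this
            omega
          obtain ⟨b, hb⟩ := hex
          have hgood : ∀ q, q ∈ B₀ → Φ c (Function.update x0 v q) b := by
            intro q hq
            exact hBdmem _ _ _ (fun hmem => hb (Finset.mem_biUnion.mpr ⟨q, hq, hmem⟩))
          refine ⟨b, fun q => if hq : q ∈ B₀ then (hgood q hq).choose else (fun _ => ⟨0, hk0⟩),
            fun _ q hq => ?_⟩
          have hspec := (hgood q hq).choose_spec
          simp only [dif_pos hq]
          exact ⟨hspec.1, hspec.2.1, hspec.2.2⟩
        · exact ⟨⟨0, hk0⟩, fun _ _ => ⟨0, hk0⟩, fun hcc => absurd hcc hc⟩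
      choose b xw hbx using hchild
      have hmid : ∀ u : W, ∃ c : W, u ∈ desc pr v → u ≠ v → (pr c = some v ∧ u ∈ desc pr c) := by
        intro u
        by_cases hu : u ∈ desc pr v ∧ u ≠ v
        · obtain ⟨hu1, hu2⟩ := hu
          rcases (mem_desc.mp hu1).cases_tail with heq | ⟨c, huc, hcv⟩
          · exact absurd heq.symm hu2
          · exact ⟨c, fun _ _ => ⟨hcv, mem_desc.mpr huc⟩⟩
        · exact ⟨v, fun h1 h2 => absurd ⟨h1, h2⟩ hu⟩
      choose mid hmid' using hmid
      set xs : Fin k → W → Fin k := fun q u =>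
        if u ∈ desc pr v then (if u = v then q else xw (mid u) q u) else x0 u with hxs
      have hxs_v : ∀ q, xs q v = q := by
        intro q; simp [hxs, self_mem_desc]
      have hxs_out : ∀ q u, u ∉ desc pr v → xs q u = x0 u := by
        intro q u hu; simp [hxs, hu]
      have hxs_in : ∀ q u, u ∈ desc pr v → u ≠ v → xs q u = xw (mid u) q u := by
        intro q u h1 h2; simp [hxs, h1, h2]
      have hagree : ∀ (c : W) (hc : pr c = some v) (q : Fin k) (hq : q ∈ B₀) (u : W),
          (u ∈ desc pr c ∨ u = v ∨ u ∉ desc pr v) → xs q u = xw c q u := by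
        intro c hc q hq u hu
        have hspec := hbx c hc q hq
        rcases hu with hu | huv | hu
        · have huv : u ∈ desc pr v := desc_subset_of_child hc hu
          have hune : u ≠ v := fun he => (not_mem_desc_of_child hpr hc) (he ▸ hu)
          have hm := hmid' u huv hune
          have hmc : mid u = c := child_unique hpr hm.1 hc hm.2 hu
          rw [hxs_in q u huv hune, hmc]
        · rw [huv, hxs_v, hspec.2.1 v (not_mem_desc_of_child hpr hc), Function.update_self]
        · rw [hxs_out q u hu]
          have hnc : u ∉ desc pr c := fun hx => hu (desc_subset_of_child hc hx)
          rw [hspec.2.1 u hnc,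
            Function.update_of_ne (fun he => hu (by rw [he]; exact self_mem_desc pr v)) _ _]
      have hconst : ∀ q ∈ B₀, F v (xs q) = F v (xs q₀) := by
        intro q hq
        apply hloc
        intro u hu
        rcases hu with hu | hu
        · have h1 : u ∉ desc pr v := by
            intro hmem
            exact absurd (hpr _ _ hu) (not_lt.mpr (desc_height hpr hmem))
          rw [hxs_out q u h1, hxs_out q₀ u h1]
        · have h1 := hagree u hu q hq u (Or.inl (self_mem_desc pr u))
          have h2 := hagree u hu q₀ hq₀ u (Or.inl (self_mem_desc pr u))
          rw [h1, h2, (hbx u hu q hq).1, (hbx u hu q₀ hq₀).1]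
      have hsub : ¬ B₀ ⊆ F v (xs q₀) := by
        intro hsub
        have h1 := Finset.card_le_card hsub
        have h2 := hcard v (xs q₀)
        omega
      obtain ⟨qs, hqsB, hqsF⟩ := Finset.not_subset.mp hsub
      have hgoodqs : Φ v x0 qs := by
        refine ⟨xs qs, hxs_v qs, fun u hu => hxs_out qs u hu, ?_⟩
        intro u hu
        by_cases huv : u = v
        · subst huv
          rw [hxs_v, hconst qs hqsB]
          exact hqsF
        · have hm := hmid' u hu huv
          set c := mid u with hcdef
          have hspec := hbx c hm.1 qs hqsB
          have hxu : xs qs u = xw c qs u := hagree c hm.1 qs hqsB u (Or.inl hm.2)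
          have hF : F u (xs qs) = F u (xw c qs) := by
            apply hloc
            intro w hw
            apply hagree c hm.1 qs hqsB w
            rcases hw with hw | hw
            · by_cases huc : u = c
              · right; left
                have h3 := hm.1
                rw [← huc, hw] at h3
                exact Option.some.inj h3
              · left
                rcases (mem_desc.mp hm.2).cases_head with heq | ⟨z, hz, hzc⟩
                · exact absurd heq huc
                · have hwz : w = z := by
                    unfold prRel at hz; rw [hw] at hz; exact Option.some.inj hz
                  rw [hwz]
                  exact mem_desc.mpr hzc
            · left
              exact mem_desc.mpr (ReflTransGen.head hw (mem_desc.mp hm.2))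
          rw [hxu, hF]
          exact hspec.2.2 u hm.2
      have := hB₀sub hqsB
      rw [hBd] at this
      simp only [Finset.mem_filter, Finset.mem_univ, true_and] at this
      exact this hgoodqs
  have hallD : ∀ u : W, u ∈ desc pr r := by
    have key : ∀ n (u : W), h u ≤ n → u ∈ desc pr r := by
      intro n
      induction n with
      | zero =>
        intro u hu
        cases hpru : pr u with
        | none => rw [hroot u hpru]; exact self_mem_desc pr r
        | some w =>
          have := hpr u w hpru
          omega
      | succ n ih =>
        intro u hu
        cases hpru : pr u with
        | none => rw [hroot u hpru]; exact self_mem_desc pr r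
        | some w =>
          have := hpr u w hpru
          have hw := ih w (by omega)
          exact mem_desc.mpr (ReflTransGen.head hpru (mem_desc.mp hw))
    exact fun u => key (h u) u le_rfl
  have hBdr := CL (desc pr r).card r (fun _ => ⟨0, hk0⟩) le_rfl
  have hexq : ∃ q : Fin k, q ∉ Bd r (fun _ => ⟨0, hk0⟩) := by
    by_contra hall
    push_neg at hall
    have hsub : (Finset.univ : Finset (Fin k)) ⊆ Bd r (fun _ => ⟨0, hk0⟩) :=
      fun q _ => hall q
    have := Finset.card_le_card hsub
    simp only [Finset.card_univ, Fintype.card_fin] at this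
    have ht : t ≤ t*(t+1) := Nat.le_mul_of_pos_right t (by omega)
    omega
  obtain ⟨q, hq⟩ := hexq
  obtain ⟨x, -, -, hx⟩ := hBdmem _ _ _ hq
  exact ⟨x, fun w => hx w (hallD w)⟩


end Core


open SimpleGraph Walk

lemma concat_isPath' {W : Type*} {T : SimpleGraph W} {u v w : W}
    {p : T.Walk u v} (hp : p.IsPath) (e : T.Adj v w) (hw : w ∉ p.support) :
    (p.concat e).IsPath := by
  rw [← isPath_reverse_iff, reverse_concat]
  refine (cons_isPath_iff _ _).mpr ⟨hp.reverse, ?_⟩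
  rw [support_reverse, List.mem_reverse]
  exact hw

lemma tree_struct {W : Type*} (T : SimpleGraph W) (hT : T.IsTree) :
    ∃ (r : W) (pr : W → Option W) (h : W → ℕ),
      (∀ a b, pr a = some b → h b < h a) ∧
      (∀ v, pr v = none → v = r) ∧
      (∀ v u, T.Adj v u → pr v = some u ∨ pr u = some v) := by
  classical
  obtain ⟨hne, hU⟩ := (SimpleGraph.isTree_iff_existsUnique_path.mp hT)
  obtain ⟨r⟩ := hne
  let P : (w : W) → T.Walk r w := fun w => (hU r w).choose
  have hP : ∀ w, (P w).IsPath := fun w => (hU r w).choose_spec.1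
  have hPu : ∀ w (p : T.Walk r w), p.IsPath → p = P w :=
    fun w p hp => (hU r w).choose_spec.2 p hp
  have KEY : ∀ v, v ≠ r → ∃ (u : W) (e : T.Adj u v), (P u).concat e = P v := by
    intro v hv
    have hlen : (P v).length ≠ 0 := fun h0 => hv (Walk.eq_of_length_eq_zero h0).symm
    have hnn : ¬ (P v).reverse.Nil := by
      rw [Walk.nil_iff_length_eq, Walk.length_reverse]
      exact hlen
    obtain ⟨u, e, q, hq⟩ := Walk.not_nil_iff.mp hnn
    refine ⟨u, e.symm, ?_⟩
    have h1 : P v = q.reverse.concat e.symm := by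
      have h2 := congrArg Walk.reverse hq
      rwa [Walk.reverse_reverse, Walk.reverse_cons] at h2
    have hqp : q.reverse.IsPath := by
      have h3 : (Walk.cons e q).IsPath := by rw [← hq]; exact (hP v).reverse
      exact (h3.of_cons).reverse
    rw [hPu u q.reverse hqp] at h1
    exact h1.symm
  let pr : W → Option W := fun v => if hv : v = r then none else some (KEY v hv).choose
  let ht : W → ℕ := fun v => (P v).length
  have hprsome : ∀ v u, pr v = some u → ∃ (e : T.Adj u v), (P u).concat e = P v := by
    intro v u hu
    simp only [pr] at hu
    split at hu
    · exact absurd hu (by simp)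
    · rename_i hv
      obtain ⟨e, he⟩ := (KEY v hv).choose_spec
      obtain rfl : u = _ := (Option.some.inj hu).symm
      exact ⟨e, he⟩
  refine ⟨r, pr, ht, ?_, ?_, ?_⟩
  · intro a b hab
    obtain ⟨e, he⟩ := hprsome a b hab
    have h1 := congrArg Walk.length he
    rw [Walk.length_concat] at h1
    simp only [ht]
    omega
  · intro v hv
    by_contra hne'
    simp [pr, hne'] at hv
  · have HALF : ∀ (v u : W), T.Adj v u → u ∈ (P v).support → pr v = some u := by
      intro v u hadj hsup
      have hvr : v ≠ r := by
        intro hvr0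
        have hnil : (Walk.nil : T.Walk r r) = P r := hPu r Walk.nil Walk.IsPath.nil
        have hsup' : u ∈ (P r).support := hvr0 ▸ hsup
        rw [← hnil] at hsup'
        simp only [Walk.support_nil, List.mem_singleton] at hsup'
        exact hadj.ne (hvr0.trans hsup'.symm)
      have hnd := Walk.take_spec (P v) hsup
      have hvt : v ∉ ((P v).takeUntil u hsup).support := by
        intro hvt
        have hnodup : (P v).support.Nodup := (hP v).support_nodup
        rw [← hnd, Walk.support_append] at hnodup
        have hdisj := List.disjoint_of_nodup_append hnodup
        have hvd : v ∈ ((P v).dropUntil u hsup).support.tail := by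
          have hend : v ∈ ((P v).dropUntil u hsup).support := Walk.end_mem_support _
          rw [Walk.support_eq_cons] at hend
          rcases List.mem_cons.mp hend with h1 | h1
          · exact absurd h1 hadj.ne
          · exact h1
        exact hdisj hvt hvd
      have hqp : (((P v).takeUntil u hsup).concat hadj.symm).IsPath :=
        concat_isPath' ((hP v).takeUntil hsup) hadj.symm hvt
      have hqe := hPu v _ hqp
      have htu : (P v).takeUntil u hsup = P u := hPu u _ ((hP v).takeUntil hsup)
      rw [htu] at hqe
      have hprv : pr v = some (KEY v hvr).choose := by simp [pr, hvr]
      obtain ⟨e, he⟩ := (KEY v hvr).choose_spec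
      have h1 := congrArg Walk.reverse he
      have h2 := congrArg Walk.reverse hqe
      rw [Walk.reverse_concat] at h1 h2
      have h3 : ((P v).reverse).getVert 1 = (KEY v hvr).choose := by
        rw [← h1, Walk.getVert_cons_succ, Walk.getVert_zero]
      have h4 : ((P v).reverse).getVert 1 = u := by
        rw [← h2, Walk.getVert_cons_succ, Walk.getVert_zero]
      exact hprv.trans (congrArg some (h3.symm.trans h4))
    intro v u hadj
    by_cases hsup : u ∈ (P v).support
    · exact Or.inl (HALF v u hadj hsup)
    · by_cases hsup' : v ∈ (P u).support
      · exact Or.inr (HALF u v hadj.symm hsup')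
      · exfalso
        have hqp : ((P u).concat hadj.symm).IsPath :=
          concat_isPath' (hP u) hadj.symm hsup'
        have hq := hPu v _ hqp
        apply hsup
        rw [← hq, Walk.support_concat]
        exact List.mem_append.mpr (Or.inl (Walk.end_mem_support _))

/-- If `G` admits a vertex partition `V = A ∪ B` (here `B = Aᶜ`) such
that `G[B]` is a tree, `A` is independent, and every vertex of `B` has at most one
neighbor in `A`, then `μ_s(G) ≤ (s²+s)(s²+s+1)` for all `s ≥ 1`; in particular
`μ(G) ≤ 6`. -/
theorem s_hat_guessing_tree_plus_independent {V : Type*} [Fintype V] [DecidableEq V]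
    (G : SimpleGraph V) (A : Finset V)
    (htree : (G.induce (↑(Aᶜ) : Set V)).IsTree)
    (hind : ∀ u ∈ A, ∀ w ∈ A, ¬ G.Adj u w)
    (hone : ∀ v ∈ Aᶜ, Set.ncard {u : V | u ∈ A ∧ G.Adj v u} ≤ 1) :
    (∀ s : ℕ, 1 ≤ s →
      sHatGuessingNumber G s ≤ (s ^ 2 + s) * (s ^ 2 + s + 1)) ∧
    sHatGuessingNumber G 1 ≤ 6 := by
  classical
  have main : ∀ s : ℕ, 1 ≤ s →
      sHatGuessingNumber G s ≤ (s ^ 2 + s) * (s ^ 2 + s + 1) := by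
    intro s hs
    apply csSup_le'
    rintro k ⟨F, hFcard, hFloc, hFwin⟩
    by_contra hk'
    push_neg at hk'
    set t := s^2+s with ht
    have htt : t*(t+1) = (s^2+s)*(s^2+s+1) := by rw [ht]
    have hk : t*(t+1)+1 ≤ k := by omega
    have hts : s + 1 ≤ t := by rw [ht]; nlinarith
    have hk0 : 0 < k := by omega
    have hmul : t ≤ t*(t+1) := Nat.le_mul_of_pos_right _ (by omega)
    have hsk : s + 1 < k := by omega
    set T := G.induce (↑(Aᶜ) : Set V) with hT
    have hmemC : ∀ u : V, u ∈ (↑(Aᶜ) : Set V) ↔ u ∉ A := by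
      intro u; simp
    have hTadj : ∀ a b : ↥(↑(Aᶜ) : Set V), T.Adj a b ↔ G.Adj ↑a ↑b := by
      intro a b; rw [hT]; exact Iff.rfl
    let emb : ℕ → Fin k := fun c => ⟨c % k, Nat.mod_lt _ hk0⟩
    have hemb : ∀ c, c ≤ s → ((emb c : Fin k) : ℕ) = c := by
      intro c hc
      show c % k = c
      exact Nat.mod_eq_of_lt (by omega)
    let ext : (↥(↑(Aᶜ) : Set V) → Fin k) → V → Fin k := fun y u =>
      if hu : u ∈ (↑(Aᶜ) : Set V) then y ⟨u, hu⟩ else ⟨0, hk0⟩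
    let upd : (↥(↑(Aᶜ) : Set V) → Fin k) → V → ℕ → V → Fin k := fun y b c u =>
      if u ∈ A ∧ G.Adj b u then emb c else ext y u
    let F' : ↥(↑(Aᶜ) : Set V) → (↥(↑(Aᶜ) : Set V) → Fin k) → Finset (Fin k) := fun b y =>
      (Finset.range (s+1)).biUnion (fun c => F ↑b (upd y ↑b c))
    have hcard' : ∀ w y, (F' w y).card ≤ t := by
      intro w y
      have h1 : (F' w y).card ≤ ∑ c ∈ Finset.range (s+1), (F ↑w (upd y ↑w c)).card :=
        Finset.card_biUnion_le
      have h2 : ∑ c ∈ Finset.range (s+1), (F (↑w : V) (upd y ↑w c)).card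
          ≤ ∑ _c ∈ Finset.range (s+1), s := Finset.sum_le_sum (fun c _ => hFcard _ _)
      have h3 : ∑ _c ∈ Finset.range (s+1), s = (s+1)*s := by
        rw [Finset.sum_const, Finset.card_range, smul_eq_mul]
      have h4 : (s+1)*s = t := by rw [ht]; ring
      omega
    have hloc' : ∀ w (y y' : ↥(↑(Aᶜ) : Set V) → Fin k),
        (∀ u, T.Adj w u → y u = y' u) → F' w y = F' w y' := by
      intro w y y' hyy
      apply Finset.biUnion_congr rfl
      intro c _
      apply hFloc
      intro u hu
      by_cases hA : u ∈ A
      · simp [upd, hA, hu]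
      · have huC : u ∈ (↑(Aᶜ) : Set V) := (hmemC u).mpr hA
        have hne : ¬ (u ∈ A ∧ G.Adj (↑w : V) u) := fun hc => hA hc.1
        simp only [upd, if_neg hne, ext, dif_pos huC]
        exact hyy ⟨u, huC⟩ ((hTadj w ⟨u, huC⟩).mpr hu)
    obtain ⟨r, pr, hgt, hpr, hroot, hcov⟩ := tree_struct T htree
    obtain ⟨y, hy⟩ := adv_core hk pr hgt hpr r hroot F' hcard' (by
      intro w y1 y2 hagr
      apply hloc' w y1 y2
      intro u hu
      exact hagr u (hcov w u hu))
    have hex : ∀ a : V, ∃ c : ℕ, c ≤ s ∧ emb c ∉ F a (ext y) := by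
      intro a
      by_contra hall
      push_neg at hall
      have hsub : (Finset.range (s+1)).image emb ⊆ F a (ext y) := by
        intro q hq
        obtain ⟨c, hc, rfl⟩ := Finset.mem_image.mp hq
        exact hall c (Nat.lt_succ_iff.mp (Finset.mem_range.mp hc))
      have hcardim : ((Finset.range (s+1)).image emb).card = s+1 := by
        rw [Finset.card_image_of_injOn, Finset.card_range]
        intro c hc d hd hcd
        have h5 := congrArg Fin.val hcd
        rw [hemb c (Nat.lt_succ_iff.mp (Finset.mem_range.mp hc)),
          hemb d (Nat.lt_succ_iff.mp (Finset.mem_range.mp hd))] at h5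
        exact h5
      have h6 := Finset.card_le_card hsub
      have h7 := hFcard a (ext y)
      omega
    choose pick hpick using hex
    set x : V → Fin k := fun v => if v ∈ A then emb (pick v) else ext y v with hx
    obtain ⟨v, hv⟩ := hFwin x
    by_cases hvA : v ∈ A
    · have hFeq : F v x = F v (ext y) := by
        apply hFloc
        intro u hu
        have huA : u ∉ A := fun huA' => hind v hvA u huA' hu
        simp only [hx, if_neg huA]
      rw [hFeq] at hv
      have hxv : x v = emb (pick v) := by simp only [hx, if_pos hvA]
      rw [hxv] at hv
      exact (hpick v).2 hv
    · have hvC : v ∈ (↑(Aᶜ) : Set V) := (hmemC v).mpr hvA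
      have hvx : x v = y ⟨v, hvC⟩ := by
        simp only [hx, if_neg hvA, ext, dif_pos hvC]
      have key : ∃ c ∈ Finset.range (s+1), F v x = F v (upd y v c) := by
        by_cases hnb : ∃ a, a ∈ A ∧ G.Adj v a
        · obtain ⟨a, haA, hava⟩ := hnb
          have huniq : ∀ u, u ∈ A → G.Adj v u → u = a := by
            intro u h1 h2
            have hone' := hone v (Finset.mem_compl.mpr hvA)
            exact (Set.ncard_le_one_iff (Set.toFinite _)).mp hone' ⟨h1, h2⟩ ⟨haA, hava⟩
          refine ⟨pick a, Finset.mem_range.mpr (by have := (hpick a).1; omega), ?_⟩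
          apply hFloc
          intro u hu
          by_cases huA : u ∈ A
          · have hua : u = a := huniq u huA hu
            subst hua
            simp [hx, upd, huA, hu]
          · have hcond : ¬ (u ∈ A ∧ G.Adj v u) := fun hc => huA hc.1
            simp [hx, upd, huA, hcond]
        · refine ⟨0, Finset.mem_range.mpr (by omega), ?_⟩
          apply hFloc
          intro u hu
          have huA : u ∉ A := fun huA' => hnb ⟨u, huA', hu⟩
          have hcond : ¬ (u ∈ A ∧ G.Adj v u) := fun hc => huA hc.1
          simp [hx, upd, huA, hcond]
      obtain ⟨c, hcr, hFeq⟩ := key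
      have : y ⟨v, hvC⟩ ∈ F' ⟨v, hvC⟩ y :=
        Finset.mem_biUnion.mpr ⟨c, hcr, by rw [← hFeq, ← hvx]; exact hv⟩
      exact hy ⟨v, hvC⟩ this
  refine ⟨main, ?_⟩
  have h6 := main 1 le_rfl
  norm_num at h6
  exact h6
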